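/- Let c_1, c_2, c_3 > 0 satisfy c_i > c_j c_k/(c_j + c_k) for every permutation (i,j,k) of (1,2,3). Then the vector p* with coordinates p*_i = (c_i c_j + c_i c_k - c_j c_k)/(c_1 c_2 + c_1 c_3 + c_2 c_3) (for {i,j,k} = {1,2,3}) has strictly positive coordinates summing to 1, and satisfies c_i(1 - p*_i)^2 = Σ_{m ≠ i} c_m p*_m (1 - p*_m) for each i, i.e., it is the interior fixed point of the three-component attractive-interaction system. -/

import Mathlib

theorem stmt17 (c₁ c₂ c₃ : ℝ) (hc₁ : 0 < c₁) (hc₂ : 0 < c₂) (hc₃ : 0 < c₃)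
    (h₁ : c₁ > c₂ * c₃ / (c₂ + c₃))
    (h₂ : c₂ > c₁ * c₃ / (c₁ + c₃))
    (h₃ : c₃ > c₁ * c₂ / (c₁ + c₂)) :
    let D := c₁ * c₂ + c₁ * c₃ + c₂ * c₃
    let p₁ := (c₁ * c₂ + c₁ * c₃ - c₂ * c₃) / D
    let p₂ := (c₁ * c₂ - c₁ * c₃ + c₂ * c₃) / D
    let p₃ := (c₁ * c₃ - c₁ * c₂ + c₂ * c₃) / D
    0 < p₁ ∧ 0 < p₂ ∧ 0 < p₃ ∧ p₁ + p₂ + p₃ = 1 ∧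
      c₁ * (1 - p₁) ^ 2 = c₂ * p₂ * (1 - p₂) + c₃ * p₃ * (1 - p₃) ∧
      c₂ * (1 - p₂) ^ 2 = c₁ * p₁ * (1 - p₁) + c₃ * p₃ * (1 - p₃) ∧
      c₃ * (1 - p₃) ^ 2 = c₁ * p₁ * (1 - p₁) + c₂ * p₂ * (1 - p₂) := by
  intro D p₁ p₂ p₃
  have hD : 0 < D := by positivity
  have hn₁ : 0 < c₁ * c₂ + c₁ * c₃ - c₂ * c₃ := by
    rw [gt_iff_lt, div_lt_iff₀ (by positivity)] at h₁; nlinarith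
  have hn₂ : 0 < c₁ * c₂ - c₁ * c₃ + c₂ * c₃ := by
    rw [gt_iff_lt, div_lt_iff₀ (by positivity)] at h₂; nlinarith
  have hn₃ : 0 < c₁ * c₃ - c₁ * c₂ + c₂ * c₃ := by
    rw [gt_iff_lt, div_lt_iff₀ (by positivity)] at h₃; nlinarith
  refine ⟨div_pos hn₁ hD, div_pos hn₂ hD, div_pos hn₃ hD, ?_, ?_, ?_, ?_⟩ <;>
    · show _ = _
      simp only [p₁, p₂, p₃, D]
      field_simp [p₁, p₂, p₃, D]
      ring
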